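/- For every integer n ≥ 1 and every integer k with 0 ≤ k ≤ 2^{n−1}, (2k+1)·θ(n,k) ≥ 2·Σ_{i=0}^{k} θ(n,i). -/

import Mathlib

open Finset

/-- Two vertices of the hypercube `Q_n` are adjacent iff they differ in exactly one
coordinate. -/
def cubeEdge {n : ℕ} (u v : Fin n → Bool) : Prop :=
  (Finset.univ.filter (fun i => u i ≠ v i)).card = 1

instance {n : ℕ} (u v : Fin n → Bool) : Decidable (cubeEdge u v) := by
  unfold cubeEdge; infer_instance

/-- `θ(n,S)`: the number of edges of `Q_n` with exactly one endpoint in `S`. -/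
def edgeBoundary (n : ℕ) (S : Finset (Fin n → Bool)) : ℕ :=
  (Finset.univ.filter (fun p : (Fin n → Bool) × (Fin n → Bool) =>
    p.1 ∈ S ∧ p.2 ∉ S ∧ cubeEdge p.1 p.2)).card

/-- `θ(n,k) = min {θ(n,S) : S ⊆ V(Q_n), |S| = k}`. -/
noncomputable def thetaMin (n k : ℕ) : ℕ :=
  sInf {m | ∃ S : Finset (Fin n → Bool), S.card = k ∧ edgeBoundary n S = m}

/-- The half plane `{x : x_i = a}` of `Q_n`. -/
def halfPlane (n : ℕ) (i : Fin n) (a : Bool) : Finset (Fin n → Bool) :=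
  Finset.univ.filter (fun x => x i = a)

/-- `Type(S) = min_H |S ∩ H|`, minimum over the `2n` half planes of `Q_n`. -/
noncomputable def typeOf (n : ℕ) (S : Finset (Fin n → Bool)) : ℕ :=
  sInf {m | ∃ (i : Fin n) (a : Bool), (S ∩ halfPlane n i a).card = m}

/-- `θ(n,k,t) = min {θ(n,S) : |S| = k, Type(S) = t}`. -/
noncomputable def thetaMinType (n k t : ℕ) : ℕ :=
  sInf {m | ∃ S : Finset (Fin n → Bool),
    S.card = k ∧ typeOf n S = t ∧ edgeBoundary n S = m}

/-- Graph distance on the cycle `C_m` with vertices labelled by naturals. -/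
def cycleDist (m a b : ℕ) : ℕ := min (Nat.dist a b) (m - Nat.dist a b)

/-- The wirelength of an embedding `η` of `Q_n` into the cycle `C_{2^n}`:
the sum of cycle distances over all (unordered) edges of `Q_n`.  (The sum over
ordered pairs counts every edge twice, whence the division by `2`.) -/
def wirelength (n : ℕ) (η : (Fin n → Bool) → ℕ) : ℕ :=
  ((Finset.univ.filter (fun p : (Fin n → Bool) × (Fin n → Bool) =>
    cubeEdge p.1 p.2)).sum (fun p => cycleDist (2^n) (η p.1) (η p.2))) / 2

/-- The reflected Gray code embedding `ξ_n(x) = (y)_2 + 1`, where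
`y_i = (x_1 + ⋯ + x_i) mod 2`. -/
def xi (n : ℕ) (x : Fin n → Bool) : ℕ :=
  (Finset.univ.sum (fun i : Fin n =>
    ((Finset.univ.filter (fun j : Fin n => j ≤ i ∧ x j = true)).card % 2)
      * 2 ^ (n - 1 - (i : ℕ)))) + 1

/-- `f(x) = 3/4 − (64/7)(x − 1/2)²`. -/
noncomputable def fGuu (x : ℝ) : ℝ := 3/4 - 64/7 * (x - 1/2)^2

/-- `takDelta i` is `Δ_{i+1}`: `Δ_1(x) = 1/2 − |x − 1/2|`,
`Δ_{n}(x) = (1/2)Δ_{n−1}(2x − ⌊2x⌋)`. -/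
noncomputable def takDelta : ℕ → ℝ → ℝ
  | 0, x => 1/2 - |x - 1/2|
  | n+1, x => takDelta n (2*x - (⌊2*x⌋ : ℝ)) / 2

/-- `m_n(x) = Σ_{i=1}^n Δ_i(x)`, the n-th partial sum of the Takagi function. -/
noncomputable def mTakagi (n : ℕ) (x : ℝ) : ℝ := ∑ i ∈ Finset.range n, takDelta i x

/-- `y_N = ⌈2^N/24⌉ / 2^N`. -/
noncomputable def yGuu (N : ℕ) : ℝ := (⌈(2^N : ℝ)/24⌉ : ℝ) / 2^N

/-- `p_N = 1/2 − y_N`. -/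
noncomputable def pGuu (N : ℕ) : ℝ := 1/2 - yGuu N

/-- `g_{n,i,a}^{-1}(S)`, where `g_{n,i,a}` inserts the letter `a` at position `i`. -/
def gPre (n : ℕ) (i : Fin (n+1)) (a : Bool) (S : Finset (Fin (n+1) → Bool)) :
    Finset (Fin n → Bool) :=
  Finset.univ.filter (fun x => i.insertNth a x ∈ S)


/-- `hB k = ∑_{i<k} s₂(i)`, defined by the binary recursion. -/
def hB : ℕ → ℕ
  | 0 => 0
  | 1 => 0
  | n+2 => hB ((n+3)/2) + hB ((n+2)/2) + (n+2)/2
decreasing_by all_goals omega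

lemma hB_zero : hB 0 = 0 := by simp [hB]
lemma hB_one : hB 1 = 0 := by simp [hB]

lemma hB_rec (m : ℕ) : hB m = hB ((m+1)/2) + hB (m/2) + m/2 := by
  match m with
  | 0 => simp [hB]
  | 1 => simp [hB]
  | n+2 => rw [hB]

lemma hB_two_mul (m : ℕ) : hB (2*m) = 2 * hB m + m := by
  have h1 : (2*m+1)/2 = m := by omega
  have h2 : (2*m)/2 = m := by omega
  rw [hB_rec (2*m), h1, h2]; ring

lemma hB_odd (m : ℕ) : hB (2*m+1) = hB (m+1) + hB m + m := by
  have h1 : (2*m+1+1)/2 = m+1 := by omega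
  have h2 : (2*m+1)/2 = m := by omega
  rw [hB_rec (2*m+1), h1, h2]

/-- Hart's lemma. -/
theorem hB_superadd (a b : ℕ) : hB a + hB b + min a b ≤ hB (a+b) := by
  have key : ∀ n a b : ℕ, a + b ≤ n → hB a + hB b + min a b ≤ hB (a+b) := by
    intro n
    induction n with
    | zero => intro a b h
              have ha : a = 0 := by omega
              have hb : b = 0 := by omega
              subst ha; subst hb; simp [hB_zero]
    | succ n ih =>
      intro a b h
      rcases Nat.eq_zero_or_pos a with ha | ha
      · subst ha; simp [hB_zero]
      rcases Nat.eq_zero_or_pos b with hb | hb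
      · subst hb; simp [hB_zero]
      rcases Nat.even_or_odd a with ⟨α, hα⟩ | ⟨α, hα⟩ <;>
        rcases Nat.even_or_odd b with ⟨β, hβ⟩ | ⟨β, hβ⟩
      · -- even, even
        subst hα; subst hβ
        have hab : (α+α) + (β+β) = 2*(α+β) := by ring
        rw [hab]
        have e1 : α + α = 2*α := by ring
        have e2 : β + β = 2*β := by ring
        rw [e1, e2, hB_two_mul, hB_two_mul, hB_two_mul]
        have := ih α β (by omega)
        omega
      · -- even, odd
        subst hα; subst hβ
        have e1 : α + α = 2*α := by ring
        have hab : (α+α) + (2*β+1) = 2*(α+β)+1 := by ring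
        rw [hab, e1, hB_two_mul, hB_odd, hB_odd]
        have h1 := ih α β (by omega)
        have h2 := ih α (β+1) (by omega)
        have h3 : α + (β+1) = (α+β)+1 := by ring
        rw [h3] at h2
        omega
      · -- odd, even
        subst hα; subst hβ
        have e2 : β + β = 2*β := by ring
        have hab : (2*α+1) + (β+β) = 2*(α+β)+1 := by ring
        rw [hab, e2, hB_two_mul, hB_odd, hB_odd]
        have h1 := ih α β (by omega)
        have h2 := ih (α+1) β (by omega)
        have h3 : (α+1) + β = (α+β)+1 := by ring
        rw [h3] at h2
        omega
      · -- odd, odd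
        subst hα; subst hβ
        have hab : (2*α+1) + (2*β+1) = 2*((α+β)+1) := by ring
        rw [hab, hB_odd, hB_odd, hB_two_mul]
        have h1 := ih α (β+1) (by omega)
        have h2 := ih (α+1) β (by omega)
        have h3 : α + (β+1) = (α+β)+1 := by ring
        have h4 : (α+1) + β = (α+β)+1 := by ring
        rw [h3] at h1; rw [h4] at h2
        omega
  exact key (a+b) a b le_rfl

lemma hB_mono_succ (m : ℕ) : hB m ≤ hB (m+1) := by
  have := hB_superadd m 1
  simp [hB_one] at this
  omega

/-- `hC k = ∑_{i ≤ k} hB i`. -/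
def hC (k : ℕ) : ℕ := ∑ i ∈ Finset.range (k+1), hB i

lemma hC_zero : hC 0 = 0 := by simp [hC, hB_zero]

lemma hC_succ (k : ℕ) : hC (k+1) = hC k + hB (k+1) := by
  simp [hC, Finset.sum_range_succ]

lemma hC_even (k : ℕ) : hC (2*k) + hB k = 4 * hC k + k^2 := by
  induction k with
  | zero => simp [hC_zero, hB_zero]
  | succ k ih =>
    have hodd : hC (2*k+1) = 4 * hC k + k^2 + k + hB (k+1) := by
      have e1 : hC (2*k+1) = hC (2*k) + hB (2*k+1) := by
        have : 2*k+1 = (2*k)+1 := rfl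
        rw [this, hC_succ]
      rw [e1, hB_odd]
      omega
    have e2 : 2*(k+1) = (2*k+1)+1 := by ring
    have e6 : (k+1)^2 = k^2 + 2*k + 1 := by ring
    rw [e2, hC_succ, e6, hC_succ]
    have e4 : hB (2*k+1+1) = 2*hB (k+1) + (k+1) := by
      have h : 2*k+1+1 = 2*(k+1) := by ring
      rw [h, hB_two_mul]
    have e5 : hC (k+1) = hC k + hB (k+1) := hC_succ k
    rw [e4, hB_odd, e5]
    generalize k^2 = q at ih ⊢
    omega

lemma hC_odd (k : ℕ) : hC (2*k+1) = 4*hC k + k^2 + k + hB (k+1) := by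
  have e1 : hC (2*k+1) = hC (2*k) + hB (2*k+1) := hC_succ (2*k)
  have e2 := hC_even k
  have e3 := hB_odd k
  generalize k^2 = q at e2 ⊢
  omega

lemma clog_two_lt (m : ℕ) (hm : 1 ≤ m) : 2^(Nat.clog 2 m) < 2*m := by
  rcases eq_or_lt_of_le hm with h | h
  · simp [← h, Nat.clog_one_right]
  · have h1 : 0 < Nat.clog 2 m := Nat.clog_pos (by norm_num) h
    have h2 : 2^(Nat.clog 2 m - 1) < m := Nat.pow_pred_clog_lt_self (by norm_num) h
    have h3 : 2^(Nat.clog 2 m) = 2 * 2^(Nat.clog 2 m - 1) := by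
      rw [← pow_succ']
      congr 1
      omega
    omega

lemma clog_two_mul (m : ℕ) (hm : 1 ≤ m) : Nat.clog 2 (2*m) = Nat.clog 2 m + 1 := by
  apply le_antisymm
  · rw [Nat.clog_le_iff_le_pow (by norm_num)]
    have := Nat.le_pow_clog (b := 2) (by norm_num) m
    rw [pow_succ]
    omega
  · have h := clog_two_lt m hm
    have : ¬ (Nat.clog 2 (2*m) ≤ Nat.clog 2 m) := by
      rw [Nat.clog_le_iff_le_pow (by norm_num)]
      omega
    omega

lemma clog_two_odd (m : ℕ) (hm : 1 ≤ m) : Nat.clog 2 (2*m+1) = Nat.clog 2 (m+1) + 1 := by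
  apply le_antisymm
  · rw [Nat.clog_le_iff_le_pow (by norm_num)]
    have := Nat.le_pow_clog (b := 2) (by norm_num) (m+1)
    rw [pow_succ]
    omega
  · have h := clog_two_lt (m+1) (by omega)
    have hpos : 0 < Nat.clog 2 (m+1) := Nat.clog_pos (by norm_num) (by omega)
    have h3 : 2^(Nat.clog 2 (m+1)) = 2 * 2^(Nat.clog 2 (m+1) - 1) := by
      rw [← pow_succ']
      congr 1
      omega
    have : ¬ (Nat.clog 2 (2*m+1) ≤ Nat.clog 2 (m+1)) := by
      rw [Nat.clog_le_iff_le_pow (by norm_num)]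
      omega
    omega

lemma clog_two_le_self (m : ℕ) : Nat.clog 2 m ≤ m := by
  rw [Nat.clog_le_iff_le_pow (by norm_num)]
  exact le_of_lt (Nat.lt_two_pow_self (n := m))

theorem keyK : ∀ k : ℕ, (4*k+2) * hB k + k ≤ (Nat.clog 2 k + 1) * k^2 + 4 * hC k := by
  intro k
  induction k using Nat.strong_induction_on with
  | _ k ih =>
    match k with
    | 0 => simp [hB_zero, hC_zero]
    | 1 => simp [hB_one, hC_succ, hC_zero, hB_zero, Nat.clog_one_right]
    | (k+2) =>
      rcases Nat.even_or_odd (k+2) with ⟨m, hm⟩ | ⟨m, hm⟩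
      · -- even : k + 2 = 2*m, m ≥ 1
        have hm1 : 1 ≤ m := by omega
        have hm2 : k + 2 = 2*m := by omega
        rw [hm2]
        have H1 := ih m (by omega)
        have e1 := hC_even m
        have e2 := hB_two_mul m
        have e3 := clog_two_mul m hm1
        rw [e3, e2]
        zify at H1 e1 ⊢
        nlinarith [H1, e1]
      · -- odd : k + 2 = 2*m+1, m ≥ 1
        have hm1 : 1 ≤ m := by omega
        have hm2 : k + 2 = 2*m+1 := by omega
        rw [hm2]
        have H1 := ih m (by omega)
        have H2 := ih (m+1) (by omega)
        have e1 := hC_odd m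
        have e2 := hB_odd m
        have e3 := clog_two_odd m hm1
        have e4 : hC (m+1) = hC m + hB (m+1) := hC_succ m
        have e5 : hB m ≤ hB (m+1) := hB_mono_succ m
        have e6 : Nat.clog 2 m + 1 ≤ 2*m+1 := by
          have := clog_two_le_self m
          omega
        have e7 : Nat.clog 2 m ≤ Nat.clog 2 (m+1) := Nat.clog_mono_right 2 (by omega)
        rw [e3, e2] at *
        rw [e4] at H2
        zify at H1 H2 e1 e5 e6 e7 ⊢
        have hp : ((Nat.clog 2 (m+1) : ℤ) - Nat.clog 2 m) * (2*(m:ℤ)^2 - 1) ≥ 0 := by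
          apply mul_nonneg
          · omega
          · nlinarith [hm1]
        nlinarith [H1, H2, e1, e5, e6, hp]

/-- ordered pairs of adjacent vertices both inside `S` -/
def pairsIn (n : ℕ) (S : Finset (Fin n → Bool)) : ℕ :=
  (Finset.univ.filter (fun p : (Fin n → Bool) × (Fin n → Bool) =>
    p.1 ∈ S ∧ p.2 ∈ S ∧ cubeEdge p.1 p.2)).card

lemma cubeEdge_iff_flip {n : ℕ} (u v : Fin n → Bool) :
    cubeEdge u v ↔ ∃ i, v = Function.update u i (!u i) := by
  constructor
  · intro h
    rw [cubeEdge, Finset.card_eq_one] at h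
    obtain ⟨i, hi⟩ := h
    refine ⟨i, funext fun j => ?_⟩
    by_cases hji : j = i
    · subst hji
      have hj : j ∈ Finset.univ.filter (fun i => u i ≠ v i) := by rw [hi]; simp
      simp only [Finset.mem_filter, Finset.mem_univ, true_and] at hj
      rw [Function.update_self]
      cases hu : u j <;> cases hv : v j <;> simp_all
    · have hj : j ∉ Finset.univ.filter (fun i => u i ≠ v i) := by
        rw [hi]; simp [hji]
      simp only [Finset.mem_filter, Finset.mem_univ, true_and, not_not] at hj
      rw [Function.update_of_ne hji]
      exact hj.symm
  · rintro ⟨i, rfl⟩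
    rw [cubeEdge]
    have : Finset.univ.filter (fun j => u j ≠ Function.update u i (!u i) j) = {i} := by
      ext j
      simp only [Finset.mem_filter, Finset.mem_univ, true_and, Finset.mem_singleton]
      by_cases hji : j = i
      · subst hji
        simp only [Function.update_self]
        cases u j <;> simp
      · simp [Function.update_of_ne hji, hji]
    rw [this, Finset.card_singleton]

lemma deg_eq {n : ℕ} (u : Fin n → Bool) :
    (Finset.univ.filter (fun v => cubeEdge u v)).card = n := by
  have hinj : Function.Injective (fun i : Fin n => Function.update u i (!u i)) := by
    intro i j h
    by_contra hne
    have h2 := congrFun h i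
    simp only [] at h2
    rw [Function.update_self, Function.update_of_ne hne] at h2
    cases u i <;> simp_all
  have himg : Finset.univ.filter (fun v => cubeEdge u v)
      = Finset.univ.image (fun i : Fin n => Function.update u i (!u i)) := by
    ext v
    simp only [Finset.mem_filter, Finset.mem_univ, true_and, Finset.mem_image,
      cubeEdge_iff_flip]
    constructor
    · rintro ⟨i, h⟩; exact ⟨i, h.symm⟩
    · rintro ⟨i, h⟩; exact ⟨i, h.symm⟩
  rw [himg, Finset.card_image_of_injective _ hinj, Finset.card_univ, Fintype.card_fin]

lemma handshake (n : ℕ) (S : Finset (Fin n → Bool)) :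
    edgeBoundary n S + pairsIn n S = n * S.card := by
  rw [edgeBoundary, pairsIn, Finset.card_filter, Finset.card_filter,
    ← Finset.sum_add_distrib]
  have step1 : ∀ p : (Fin n → Bool) × (Fin n → Bool),
      ((if p.1 ∈ S ∧ p.2 ∉ S ∧ cubeEdge p.1 p.2 then 1 else 0)
      + if p.1 ∈ S ∧ p.2 ∈ S ∧ cubeEdge p.1 p.2 then 1 else 0)
      = if p.1 ∈ S ∧ cubeEdge p.1 p.2 then 1 else 0 := by
    intro p
    by_cases h1 : p.1 ∈ S <;> by_cases h2 : p.2 ∈ S <;>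
      by_cases h3 : cubeEdge p.1 p.2 <;> simp [h1, h2, h3]
  rw [Finset.sum_congr rfl (fun p _ => step1 p), Fintype.sum_prod_type]
  have step2 : ∀ u : Fin n → Bool,
      (∑ v : Fin n → Bool, if u ∈ S ∧ cubeEdge u v then 1 else 0)
      = if u ∈ S then n else 0 := by
    intro u
    by_cases hu : u ∈ S
    · simp only [hu, true_and, if_true]
      rw [← Finset.card_filter, deg_eq]
    · simp [hu]
  rw [Finset.sum_congr rfl (fun u _ => step2 u)]
  rw [Finset.sum_ite_mem, Finset.univ_inter, Finset.sum_const, smul_eq_mul, mul_comm]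

lemma cubeEdge_cons {n : ℕ} (a b : Bool) (x y : Fin n → Bool) :
    cubeEdge (Fin.cons a x) (Fin.cons b y)
      ↔ ((a = b ∧ cubeEdge x y) ∨ (a ≠ b ∧ x = y)) := by
  have hsplit : (Finset.univ.filter
        (fun i => (Fin.cons a x : Fin (n+1) → Bool) i
          ≠ (Fin.cons b y : Fin (n+1) → Bool) i)).card
      = (if a = b then 0 else 1)
        + (Finset.univ.filter (fun i => x i ≠ y i)).card := by
    rw [Finset.card_filter, Fin.sum_univ_succ, ← Finset.card_filter]
    simp only [Fin.cons_zero, Fin.cons_succ]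
    by_cases hab : a = b <;> simp [hab]
  rw [cubeEdge, hsplit]
  by_cases hab : a = b
  · subst hab
    rw [cubeEdge]
    simp
  · rw [if_neg hab]
    constructor
    · intro h
      have hc : (Finset.univ.filter (fun i => x i ≠ y i)).card = 0 := by omega
      rw [Finset.card_eq_zero, Finset.filter_eq_empty_iff] at hc
      exact Or.inr ⟨hab, funext fun i => by simpa using hc (Finset.mem_univ i)⟩
    · rintro (⟨h, -⟩ | ⟨-, rfl⟩)
      · exact absurd h hab
      have he : (Finset.univ.filter (fun i => x i ≠ x i)) = (∅ : Finset (Fin n)) := by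
        apply Finset.filter_eq_empty_iff.mpr
        simp
      rw [he]
      simp

/-- the section of `S` over first coordinate `b` -/
def sec {n : ℕ} (S : Finset (Fin (n+1) → Bool)) (b : Bool) : Finset (Fin n → Bool) :=
  Finset.univ.filter (fun x => Fin.cons b x ∈ S)

lemma mem_sec {n : ℕ} (S : Finset (Fin (n+1) → Bool)) (b : Bool) (x : Fin n → Bool) :
    x ∈ sec S b ↔ Fin.cons b x ∈ S := by simp [sec]

/-- the equivalence used for splitting -/
def consE (n : ℕ) : Bool × (Fin n → Bool) ≃ (Fin (n+1) → Bool) :=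
  Fin.consEquiv (fun _ => Bool)

lemma sum_split {n : ℕ} (f : (Fin (n+1) → Bool) → ℕ) :
    ∑ z : Fin (n+1) → Bool, f z
      = (∑ x : Fin n → Bool, f (Fin.cons true x))
        + (∑ x : Fin n → Bool, f (Fin.cons false x)) := by
  rw [← Equiv.sum_comp (consE n) f, Fintype.sum_prod_type, Fintype.sum_bool]
  rfl

lemma card_sec {n : ℕ} (S : Finset (Fin (n+1) → Bool)) :
    (sec S false).card + (sec S true).card = S.card := by
  have h1 : S.card = ∑ z : Fin (n+1) → Bool, if z ∈ S then 1 else 0 := by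
    conv_lhs => rw [← Finset.filter_univ_mem S]
    rw [Finset.card_filter]
  rw [h1, sum_split, sec, sec, Finset.card_filter, Finset.card_filter]
  omega

lemma pairsIn_succ {n : ℕ} (S : Finset (Fin (n+1) → Bool)) :
    pairsIn (n+1) S = pairsIn n (sec S false) + pairsIn n (sec S true)
      + 2 * ((sec S false) ∩ (sec S true)).card := by
  have hpair : ∀ (T : Finset (Fin n → Bool)), pairsIn n T
      = ∑ x : Fin n → Bool, ∑ y : Fin n → Bool,
        if x ∈ T ∧ y ∈ T ∧ cubeEdge x y then 1 else 0 := by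
    intro T
    rw [pairsIn, Finset.card_filter, Fintype.sum_prod_type]
  have hsame : ∀ a : Bool,
      (∑ x : Fin n → Bool, ∑ y : Fin n → Bool,
        if Fin.cons a x ∈ S ∧ Fin.cons a y ∈ S
            ∧ cubeEdge (Fin.cons a x) (Fin.cons a y) then 1 else 0)
      = pairsIn n (sec S a) := by
    intro a
    rw [hpair]
    apply Finset.sum_congr rfl; intro x _
    apply Finset.sum_congr rfl; intro y _
    refine if_congr ?_ rfl rfl
    simp [mem_sec, cubeEdge_cons]
  have hcross : ∀ a b : Bool, a ≠ b →
      (∑ x : Fin n → Bool, ∑ y : Fin n → Bool,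
        if Fin.cons a x ∈ S ∧ Fin.cons b y ∈ S
            ∧ cubeEdge (Fin.cons a x) (Fin.cons b y) then 1 else 0)
      = ((sec S a) ∩ (sec S b)).card := by
    intro a b hab
    have hterm : ∀ x y : Fin n → Bool,
        (if Fin.cons a x ∈ S ∧ Fin.cons b y ∈ S
            ∧ cubeEdge (Fin.cons a x) (Fin.cons b y) then 1 else 0)
        = if y = x then
            (if Fin.cons a x ∈ S ∧ Fin.cons b x ∈ S then 1 else 0) else 0 := by
      intro x y
      by_cases hxy : y = x
      · subst hxy
        have hedge : cubeEdge (Fin.cons a y) (Fin.cons b y) := by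
          rw [cubeEdge_cons]
          exact Or.inr ⟨hab, rfl⟩
        by_cases h1 : Fin.cons a y ∈ S <;> by_cases h2 : Fin.cons b y ∈ S <;>
          simp [h1, h2, hedge]
      · have hne : ¬ cubeEdge (Fin.cons a x) (Fin.cons b y) := by
          rw [cubeEdge_cons]
          rintro (⟨h, -⟩ | ⟨-, h⟩)
          · exact hab h
          · exact hxy h.symm
        simp [hne, hxy]
    simp only [hterm]
    rw [sec, sec, ← Finset.filter_and, Finset.card_filter]
    apply Finset.sum_congr rfl
    intro x _
    rw [Finset.sum_ite_eq' Finset.univ x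
      (fun _ => if Fin.cons a x ∈ S ∧ Fin.cons b x ∈ S then 1 else 0)]
    simp
  rw [pairsIn, Finset.card_filter, Fintype.sum_prod_type]
  rw [sum_split (fun z => ∑ w : Fin (n+1) → Bool,
    if z ∈ S ∧ w ∈ S ∧ cubeEdge z w then 1 else 0)]
  simp only [sum_split (n := n)]
  rw [Finset.sum_add_distrib, Finset.sum_add_distrib]
  rw [hsame true, hsame false, hcross true false (by simp), hcross false true (by simp)]
  rw [Finset.inter_comm (sec S true) (sec S false)]
  omega

/-- Initial segments: the first `m` vertices in binary order. -/
def Iseg : (n : ℕ) → ℕ → Finset (Fin n → Bool)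
  | 0, m => if 1 ≤ m then Finset.univ else ∅
  | n+1, m => ((Iseg n ((m+1)/2)).image
        (fun x => (Fin.cons false x : Fin (n+1) → Bool)))
      ∪ ((Iseg n (m/2)).image (fun x => (Fin.cons true x : Fin (n+1) → Bool)))

lemma cons_injective {n : ℕ} (b : Bool) :
    Function.Injective (fun x : Fin n → Bool => (Fin.cons b x : Fin (n+1) → Bool)) := by
  intro x y h
  funext i
  have := congrFun h i.succ
  simpa using this

lemma sec_Iseg {n : ℕ} (m : ℕ) (b : Bool) :
    sec (Iseg (n+1) m) b = Iseg n (if b then m/2 else (m+1)/2) := by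
  ext x
  rw [mem_sec, Iseg]
  simp only [Finset.mem_union, Finset.mem_image]
  constructor
  · rintro (⟨y, hy, he⟩ | ⟨y, hy, he⟩)
    · have hb : b = false := by
        have := congrFun he 0
        simpa using this.symm
      subst hb
      have : y = x := cons_injective false (by exact he)
      subst this
      simpa using hy
    · have hb : b = true := by
        have := congrFun he 0
        simpa using this.symm
      subst hb
      have : y = x := cons_injective true (by exact he)
      subst this
      simpa using hy
  · intro hx
    cases b
    · exact Or.inl ⟨x, by simpa using hx, rfl⟩
    · exact Or.inr ⟨x, by simpa using hx, rfl⟩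

lemma Iseg_mono {n : ℕ} : ∀ {m m' : ℕ}, m ≤ m' → Iseg n m ⊆ Iseg n m' := by
  induction n with
  | zero =>
    intro m m' h
    rw [Iseg, Iseg]
    by_cases h1 : 1 ≤ m
    · rw [if_pos h1, if_pos (le_trans h1 h)]
    · rw [if_neg h1]
      intro z hz
      simp at hz
  | succ n ih =>
    intro m m' h
    rw [Iseg, Iseg]
    apply Finset.union_subset_union
    · exact Finset.image_subset_image (ih (by omega))
    · exact Finset.image_subset_image (ih (by omega))

lemma Iseg_card {n : ℕ} : ∀ {m : ℕ}, m ≤ 2^n → (Iseg n m).card = m := by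
  induction n with
  | zero =>
    intro m h
    interval_cases m
    · rw [Iseg]; simp
    · rw [Iseg]; simp
  | succ n ih =>
    intro m h
    rw [Iseg]
    have hdisj : Disjoint ((Iseg n ((m+1)/2)).image
          (fun x => (Fin.cons false x : Fin (n+1) → Bool)))
        ((Iseg n (m/2)).image (fun x => (Fin.cons true x : Fin (n+1) → Bool))) := by
      rw [Finset.disjoint_left]
      rintro z hz1 hz2
      simp only [Finset.mem_image] at hz1 hz2
      obtain ⟨y1, -, he1⟩ := hz1
      obtain ⟨y2, -, he2⟩ := hz2
      have := congrFun he1 0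
      have := congrFun he2 0
      simp_all
    rw [Finset.card_union_of_disjoint hdisj,
      Finset.card_image_of_injective _ (cons_injective false),
      Finset.card_image_of_injective _ (cons_injective true),
      ih (by omega), ih (by omega)]
    omega

lemma pairsIn_zero (S : Finset (Fin 0 → Bool)) : pairsIn 0 S = 0 := by
  rw [pairsIn, Finset.card_eq_zero, Finset.filter_eq_empty_iff]
  rintro p -
  rintro ⟨-, -, he⟩
  rw [cubeEdge] at he
  have : (Finset.univ : Finset (Fin 0)) = ∅ := rfl
  rw [this] at he
  simp at he

lemma Iseg_pairs {n : ℕ} : ∀ {m : ℕ}, m ≤ 2^n → pairsIn n (Iseg n m) = 2 * hB m := by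
  induction n with
  | zero =>
    intro m h
    rw [pairsIn_zero]
    interval_cases m
    · rw [hB_zero]
    · rw [hB_one]
  | succ n ih =>
    intro m h
    rw [pairsIn_succ]
    have h0 : sec (Iseg (n+1) m) false = Iseg n ((m+1)/2) := by
      rw [sec_Iseg]
      norm_num
    have h1 : sec (Iseg (n+1) m) true = Iseg n (m/2) := by
      rw [sec_Iseg]
      norm_num
    rw [h0, h1, ih (by omega), ih (by omega)]
    have hsub : Iseg n (m/2) ⊆ Iseg n ((m+1)/2) := Iseg_mono (by omega)
    rw [Finset.inter_eq_right.mpr hsub, Iseg_card (by omega), hB_rec m]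
    ring

lemma pairsIn_le : ∀ (n : ℕ) (S : Finset (Fin n → Bool)),
    pairsIn n S ≤ 2 * hB S.card := by
  intro n
  induction n with
  | zero =>
    intro S
    rw [pairsIn_zero]
    exact Nat.zero_le _
  | succ n ih =>
    intro S
    rw [pairsIn_succ, ← card_sec S]
    have h1 := ih (sec S false)
    have h2 := ih (sec S true)
    have hm1 : ((sec S false) ∩ (sec S true)).card ≤ (sec S false).card :=
      Finset.card_le_card Finset.inter_subset_left
    have hm2 : ((sec S false) ∩ (sec S true)).card ≤ (sec S true).card :=
      Finset.card_le_card Finset.inter_subset_right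
    have hart := hB_superadd (sec S false).card (sec S true).card
    omega

lemma thetaMin_formula_le {n m : ℕ} (h : m ≤ 2^n) :
    thetaMin n m + 2 * hB m ≤ n * m := by
  have hw1 : (Iseg n m).card = m := Iseg_card h
  have hw2 : pairsIn n (Iseg n m) = 2 * hB m := Iseg_pairs h
  have hle : thetaMin n m ≤ edgeBoundary n (Iseg n m) :=
    Nat.sInf_le ⟨Iseg n m, hw1, rfl⟩
  have hhs := handshake n (Iseg n m)
  rw [hw1, hw2] at hhs
  omega

lemma thetaMin_formula_ge {n m : ℕ} (h : m ≤ 2^n) :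
    n * m ≤ thetaMin n m + 2 * hB m := by
  have hne : {t | ∃ S : Finset (Fin n → Bool),
      S.card = m ∧ edgeBoundary n S = t}.Nonempty :=
    ⟨edgeBoundary n (Iseg n m), Iseg n m, Iseg_card h, rfl⟩
  obtain ⟨S, hS, hE⟩ := Nat.sInf_mem hne
  have htheta : thetaMin n m = edgeBoundary n S := hE.symm
  have hhs := handshake n S
  have hp : pairsIn n S ≤ 2 * hB m := by
    have := pairsIn_le n S
    rwa [hS] at this
  rw [hS] at hhs
  omega

/-- Guu, Theorem 13. For `0 ≤ k ≤ 2^{n−1}`,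
`(2k+1)θ(n,k) ≥ 2 Σ_{i=0}^k θ(n,i)`. -/
theorem theta_partial_sum_bound (n k : ℕ) (hn : 1 ≤ n) (hk : k ≤ 2^(n-1)) :
    (2*k + 1) * thetaMin n k ≥ 2 * ∑ i ∈ Finset.range (k+1), thetaMin n i := by
  have h2 : (2:ℕ)^(n-1) ≤ 2^n := Nat.pow_le_pow_right (by norm_num) (by omega)
  have hk2 : k ≤ 2^n := le_trans hk h2
  have A1 : n * k ≤ thetaMin n k + 2 * hB k := thetaMin_formula_ge hk2
  have A1' : (2*k+1) * (n*k) ≤ (2*k+1) * (thetaMin n k + 2 * hB k) :=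
    Nat.mul_le_mul_left _ A1
  have hclog : Nat.clog 2 k + 1 ≤ n := by
    have := (Nat.clog_le_iff_le_pow (b := 2) (by norm_num)).mpr hk
    omega
  have A3 : (4*k+2) * hB k + k ≤ n * k^2 + 4 * hC k := by
    refine le_trans (keyK k) ?_
    have : (Nat.clog 2 k + 1) * k^2 ≤ n * k^2 :=
      Nat.mul_le_mul_right _ hclog
    omega
  have A2 : 2 * (∑ i ∈ Finset.range (k+1), thetaMin n i) + 4 * hC k
      ≤ n * (k * (k+1)) := by
    have hstep : ∀ i ∈ Finset.range (k+1),
        thetaMin n i + 2 * hB i ≤ n * i := by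
      intro i hi
      rw [Finset.mem_range] at hi
      exact thetaMin_formula_le (le_trans (by omega) hk2)
    have hsum := Finset.sum_le_sum hstep
    rw [Finset.sum_add_distrib, ← Finset.mul_sum, ← Finset.mul_sum] at hsum
    have hgauss : (∑ i ∈ Finset.range (k+1), i) * 2 = (k+1) * k :=
      Finset.sum_range_id_mul_two (k+1)
    have heq : n * (k * (k+1)) = (n * ∑ i ∈ Finset.range (k+1), i) * 2 := by
      rw [mul_assoc, hgauss]
      ring
    have hCk : hC k = ∑ i ∈ Finset.range (k+1), hB i := rfl
    rw [heq, hCk]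
    omega
  rw [ge_iff_le]
  zify at A1' A2 A3 ⊢
  nlinarith [A1', A2, A3]
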